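/- In the plane-wave 2×2 symbol matrix A = [[νₓ²k_h², ν_z²k_z²],[ν_n²k_h², ν_z²k_z²]] for the VTI system, both eigenvalues λ of A are nonnegative if and only if ε ≥ δ (equivalently νₓ ≥ ν_n), given νₓ = ν_z√(1+2ε), ν_n = ν_z√(1+2δ), ν_z > 0 and k_h, k_z not both zero. In particular, if ε < δ one eigenvalue is negative for generic wavevectors, making the system ill-posed (exponentially growing modes). -/
import Mathlib

lemma spec2 (a b c d lam : ℝ) :
    lam ∈ spectrum ℝ (Matrix.of ![![a,b],![c,d]]) ↔ (lam - a)*(lam - d) - b*c = 0 := by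
  rw [spectrum.mem_iff, Matrix.isUnit_iff_isUnit_det, isUnit_iff_ne_zero, not_not]
  have h : ((algebraMap ℝ (Matrix (Fin 2) (Fin 2) ℝ)) lam - Matrix.of ![![a,b],![c,d]]).det
      = (lam - a)*(lam - d) - b*c := by
    simp [Matrix.det_fin_two, Matrix.algebraMap_matrix_apply]
  rw [h]

/-- For the VTI plane-wave symbol matrix `A = [[νₓ²k_h², ν_z²k_z²],[ν_n²k_h², ν_z²k_z²]]`
with `νₓ = ν_z√(1+2ε)`, `ν_n = ν_z√(1+2δ)`, `ν_z > 0`, and nonzero wavevector components,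
all (real) eigenvalues of `A` are nonnegative if and only if `ε ≥ δ`. -/
theorem vti_wellposed_iff (νz ε δ kh kz : ℝ) (hνz : 0 < νz)
    (hε : -(1/2) < ε) (hδ : -(1/2) < δ) (hkh : kh ≠ 0) (hkz : kz ≠ 0) :
    (∀ lam ∈ spectrum ℝ
        (Matrix.of ![![(νz * Real.sqrt (1 + 2 * ε)) ^ 2 * kh ^ 2, νz ^ 2 * kz ^ 2],
                     ![(νz * Real.sqrt (1 + 2 * δ)) ^ 2 * kh ^ 2, νz ^ 2 * kz ^ 2]]),
        0 ≤ lam) ↔ δ ≤ ε := by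
  have hε' : (0:ℝ) < 1 + 2*ε := by linarith
  have hδ' : (0:ℝ) < 1 + 2*δ := by linarith
  have hsε : Real.sqrt (1 + 2*ε) ^ 2 = 1 + 2*ε := Real.sq_sqrt hε'.le
  have hsδ : Real.sqrt (1 + 2*δ) ^ 2 = 1 + 2*δ := Real.sq_sqrt hδ'.le
  set a := (νz * Real.sqrt (1 + 2 * ε)) ^ 2 * kh ^ 2 with ha
  set b := νz ^ 2 * kz ^ 2 with hb
  set c := (νz * Real.sqrt (1 + 2 * δ)) ^ 2 * kh ^ 2 with hc
  have hkh2 : 0 < kh^2 := pow_pos (abs_pos.mpr hkh) 2 |>.trans_eq (by rw [sq_abs])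
  have hkz2 : 0 < kz^2 := pow_pos (abs_pos.mpr hkz) 2 |>.trans_eq (by rw [sq_abs])
  have hνz2 : 0 < νz^2 := pow_pos hνz 2
  have hav : a = νz^2 * (1 + 2*ε) * kh^2 := by rw [ha, mul_pow, hsε]
  have hcv : c = νz^2 * (1 + 2*δ) * kh^2 := by rw [hc, mul_pow, hsδ]
  have hapos : 0 < a := by rw [hav]; positivity
  have hcpos : 0 < c := by rw [hcv]; positivity
  have hbpos : 0 < b := by rw [hb]; positivity
  constructor
  · intro H
    by_contra hlt
    push_neg at hlt
    -- a < c
    have hac : a < c := by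
      rw [hav, hcv]
      have := mul_lt_mul_of_pos_right (mul_lt_mul_of_pos_left (by linarith : 1+2*ε < 1+2*δ) hνz2) hkh2
      linarith
    set D := (a - b)^2 + 4*b*c with hD
    have hDpos : 0 < D := by positivity
    have hsD : Real.sqrt D ^ 2 = D := Real.sq_sqrt hDpos.le
    set lam := ((a + b) - Real.sqrt D) / 2 with hlam
    have hmem : lam ∈ spectrum ℝ
        (Matrix.of ![![a, b], ![c, b]]) := by
      rw [spec2]
      rw [hlam]
      linear_combination hsD / 4
    have := H lam hmem
    -- lam < 0 since √D > a + b
    have hDgt : (a+b)^2 < D := by nlinarith [mul_pos hbpos (sub_pos.mpr hac)]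
    have hsqgt : a + b < Real.sqrt D := by
      exact (Real.lt_sqrt (by positivity)).mpr hDgt
    rw [hlam] at this
    linarith
  · intro hde lam hmem
    rw [spec2] at hmem
    have hac : c ≤ a := by
      rw [hav, hcv]
      nlinarith
    by_contra hneg
    push_neg at hneg
    nlinarith [hmem, mul_nonneg hbpos.le (sub_nonneg.mpr hac), mul_pos (show (0:ℝ) < -lam by linarith) (show (0:ℝ) < a + b by linarith), mul_pos (show (0:ℝ) < -lam by linarith) (show (0:ℝ) < -lam by linarith)]
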